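/- Suppose Y ~ ν on a Polish space S2, ξ1 and ξ2 are uniform on [0,1], and Y, ξ1, ξ2 are mutually independent. If G1, G2 : S2×[0,1] → S1 are Borel measurable and G1(Y,ξ1) = G2(Y,ξ2) almost surely, then there exists a Borel measurable F : S2 → S1 with F(Y) = G1(Y,ξ1) = G2(Y,ξ2) almost surely. -/
import Mathlib


open MeasureTheory ProbabilityTheory

/-- Lemma A.2 of Kurtz (2007): if two randomizations agree a.s., the common value
is a.s. a Borel function of `Y` alone. -/
theorem stmt4
    {S1 S2 : Type} [MeasurableSpace S1] [TopologicalSpace S1] [PolishSpace S1] [BorelSpace S1]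
    [MeasurableSpace S2] [TopologicalSpace S2] [PolishSpace S2] [BorelSpace S2]
    (ν : Measure S2) [IsProbabilityMeasure ν]
    {Ω : Type} [MeasurableSpace Ω] (P : Measure Ω) [IsProbabilityMeasure P]
    (Y : Ω → S2) (ξ1 ξ2 : Ω → ℝ)
    (hY : Measurable Y) (hξ1 : Measurable ξ1) (hξ2 : Measurable ξ2)
    (hlaw : P.map (fun ω => (Y ω, ξ1 ω, ξ2 ω)) =
      ν.prod ((volume.restrict (Set.Icc (0:ℝ) 1)).prod (volume.restrict (Set.Icc (0:ℝ) 1))))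
    (G1 G2 : S2 × ℝ → S1) (hG1 : Measurable G1) (hG2 : Measurable G2)
    (heq : (fun ω => G1 (Y ω, ξ1 ω)) =ᵐ[P] fun ω => G2 (Y ω, ξ2 ω)) :
    ∃ F : S2 → S1, Measurable F ∧
      (fun ω => F (Y ω)) =ᵐ[P] (fun ω => G1 (Y ω, ξ1 ω)) ∧
      (fun ω => F (Y ω)) =ᵐ[P] (fun ω => G2 (Y ω, ξ2 ω)) := by
  classical
  set μ : Measure ℝ := volume.restrict (Set.Icc (0:ℝ) 1) with hμdef
  haveI : IsProbabilityMeasure μ := ⟨by simp [hμdef, Real.volume_Icc]⟩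
  -- nonemptiness
  haveI hS2 : Nonempty S2 := by
    by_contra hne
    rw [not_nonempty_iff] at hne
    have : ν Set.univ = 1 := measure_univ
    rw [Set.univ_eq_empty_iff.mpr hne] at this
    simp at this
  haveI hS1 : Nonempty S1 := ⟨G1 (Classical.arbitrary S2, 0)⟩
  -- measurable embedding into ℝ
  obtain ⟨e, he⟩ := exists_measurableEmbedding_real S1
  set g : S2 × ℝ → ℝ := fun p => e (G1 p) with hgdef
  have hg : Measurable g := he.measurable.comp hG1
  set h : S2 → ℝ := fun y => ∫ t, g (y, t) ∂μ with hhdef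
  have hh : Measurable h :=
    (hg.stronglyMeasurable.integral_prod_right').measurable
  -- the function F
  set F : S2 → S1 := fun y =>
    if hy : h y ∈ Set.range e then Set.rangeSplitting e ⟨h y, hy⟩
    else Classical.arbitrary S1 with hFdef
  have hrange : MeasurableSet (Set.range e) := he.measurableSet_range
  have hF : Measurable F := by
    apply Measurable.dite (f := fun (y : {y : S2 // h y ∈ Set.range e}) =>
        Set.rangeSplitting e ⟨h y.1, y.2⟩)
      (g := fun _ => Classical.arbitrary S1)
    · exact he.measurable_rangeSplitting.comp
        ((hh.comp measurable_subtype_coe).subtype_mk)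
    · exact measurable_const
    · exact hh hrange
  -- canonical space
  set T : Ω → S2 × ℝ × ℝ := fun ω => (Y ω, ξ1 ω, ξ2 ω) with hTdef
  have hT : Measurable T := hY.prodMk (hξ1.prodMk hξ2)
  set ρ : Measure (S2 × ℝ × ℝ) := ν.prod (μ.prod μ) with hρdef
  have hρ : P.map T = ρ := hlaw
  -- transfer heq to the canonical space
  have hm1 : Measurable fun p : S2 × ℝ × ℝ => G1 (p.1, p.2.1) := by fun_prop
  have hm2 : Measurable fun p : S2 × ℝ × ℝ => G2 (p.1, p.2.2) := by fun_prop
  have hmF : Measurable fun p : S2 × ℝ × ℝ => F p.1 := by fun_prop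
  have hset : MeasurableSet {p : S2 × ℝ × ℝ | G1 (p.1, p.2.1) = G2 (p.1, p.2.2)} :=
    StronglyMeasurable.measurableSet_eq_fun hm1.stronglyMeasurable hm2.stronglyMeasurable
  have hae : ∀ᵐ p ∂ρ, G1 (p.1, p.2.1) = G2 (p.1, p.2.2) := by
    rw [← hρ, ae_map_iff hT.aemeasurable hset]
    exact heq
  -- Fubini: for ν-a.e. y we get the a.e. statement in (t1, t2)
  have hae2 : ∀ᵐ y ∂ν, ∀ᵐ z ∂(μ.prod μ), G1 (y, z.1) = G2 (y, z.2) :=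
    Measure.ae_ae_of_ae_prod hae
  -- key pointwise claim for good y
  have hkey : ∀ᵐ y ∂ν, h y ∈ Set.range e ∧ ∀ᵐ t ∂μ, g (y, t) = h y := by
    filter_upwards [hae2] with y hy
    -- find t2₀ such that G1 (y, ·) = G2 (y, t2₀) a.e.
    have hswap : ∀ᵐ z ∂(μ.prod μ), G1 (y, z.2) = G2 (y, z.1) := by
      rw [← Measure.prod_swap]
      rw [ae_map_iff measurable_swap.aemeasurable]
      · exact hy
      · have ha : Measurable fun z : ℝ × ℝ => G1 (y, z.2) := by fun_prop
        have hb : Measurable fun z : ℝ × ℝ => G2 (y, z.1) := by fun_prop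
        exact StronglyMeasurable.measurableSet_eq_fun ha.stronglyMeasurable hb.stronglyMeasurable
    have h2 : ∀ᵐ t2 ∂μ, ∀ᵐ t1 ∂μ, G1 (y, t1) = G2 (y, t2) := by
      have := Measure.ae_ae_of_ae_prod hswap
      exact this
    obtain ⟨t0, ht0⟩ := h2.exists
    set c : S1 := G2 (y, t0) with hcdef
    have hc : ∀ᵐ t ∂μ, G1 (y, t) = c := ht0
    have hgc : ∀ᵐ t ∂μ, g (y, t) = e c := by
      filter_upwards [hc] with t ht
      simp [hgdef, ht]
    have hint : h y = e c := by
      rw [hhdef]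
      simp only
      rw [integral_congr_ae hgc, integral_const]
      simp
    constructor
    · exact hint ▸ ⟨c, rfl⟩
    · filter_upwards [hgc] with t ht
      rw [ht, hint]
  -- from the key claim, F y = G1 (y, t) for a.e. (y, t)
  have hFG : ∀ᵐ y ∂ν, ∀ᵐ z ∂(μ.prod μ), F y = G1 (y, z.1) := by
    filter_upwards [hkey] with y hy
    obtain ⟨hmem, hconst⟩ := hy
    have heF : e (F y) = h y := by
      rw [hFdef]
      simp only [hmem, dif_pos]
      exact Set.apply_rangeSplitting e ⟨h y, hmem⟩
    have : ∀ᵐ t ∂μ, F y = G1 (y, t) := by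
      filter_upwards [hconst] with t ht
      apply he.injective
      rw [heF, ← ht]
    rw [Measure.ae_prod_iff_ae_ae]
    · exact this.mono fun t1 ht1 => Filter.Eventually.of_forall fun t2 => ht1
    · have hb : Measurable fun z : ℝ × ℝ => G1 (y, z.1) := by fun_prop
      exact StronglyMeasurable.measurableSet_eq_fun stronglyMeasurable_const hb.stronglyMeasurable
  -- assemble: measure of the bad set in ρ is zero
  have hgood : ∀ᵐ p ∂ρ, F p.1 = G1 (p.1, p.2.1) := by
    rw [hρdef, Measure.ae_prod_iff_ae_ae]
    · exact hFG
    · exact StronglyMeasurable.measurableSet_eq_fun hmF.stronglyMeasurable hm1.stronglyMeasurable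
  have hmain : (fun ω => F (Y ω)) =ᵐ[P] fun ω => G1 (Y ω, ξ1 ω) := by
    have := (ae_map_iff hT.aemeasurable
      (StronglyMeasurable.measurableSet_eq_fun hmF.stronglyMeasurable hm1.stronglyMeasurable)).mp
      (by rw [hρ]; exact hgood)
    exact this
  exact ⟨F, hF, hmain, hmain.trans heq⟩
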